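/- arXiv:1403.0251 — 3 statements merged into one kernel-verified Lean document; each statement's English description precedes it below -/
import Mathlib

section
/- Let Λ be a group acting transitively on the flags of a regular incidence complex K of rank n with base flag Φ = {F₀,...,F_{n-1}}, and for each i let R_i be the stabilizer in Λ of Φ \ {F_i}. Then Λ is generated by R₀,...,R_{n-1}. -/
universe u

variable {α : Type u}

/-- A ranked partial order `(α, ≤)` with rank function `rk` is an incidence complex of
rank `n`: ranks run from `-1` to `n` and are strictly monotone, there are unique minimal
and maximal faces, every flag (maximal chain) contains a face of each rank `-1,…,n` (hence
has exactly `n+2` faces), the complex is strongly flag-connected, and between any two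
incident faces of ranks `j-1` and `j+1` there are at least two faces of rank `j`. -/
structure IsIncidenceComplex (n : ℕ) [PartialOrder α] (rk : α → ℤ) : Prop where
  rk_strictMono : ∀ {F G : α}, F < G → rk F < rk G
  rk_range : ∀ F : α, -1 ≤ rk F ∧ rk F ≤ n
  exists_bot : ∃ B : α, rk B = -1 ∧ ∀ F : α, B ≤ F
  exists_top : ∃ T : α, rk T = n ∧ ∀ F : α, F ≤ T
  flag_rk : ∀ Φ : Set α, IsMaxChain (· ≤ ·) Φ → ∀ j : ℤ, -1 ≤ j → j ≤ n →
    ∃ F ∈ Φ, rk F = j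
  strongly_connected : ∀ Φ Ψ : Set α, IsMaxChain (· ≤ ·) Φ → IsMaxChain (· ≤ ·) Ψ →
    Relation.ReflTransGen
      (fun A B => IsMaxChain (· ≤ ·) A ∧ IsMaxChain (· ≤ ·) B ∧ Φ ∩ Ψ ⊆ A ∧ Φ ∩ Ψ ⊆ B ∧
        ∃ F G, F ∈ A ∧ G ∈ B ∧ F ≠ G ∧ A \ {F} = B \ {G}) Φ Ψ
  diamond_ge_two : ∀ F G : α, F < G → rk G = rk F + 2 →
    ∃ H₁ H₂ : α, H₁ ≠ H₂ ∧ F < H₁ ∧ H₁ < G ∧ F < H₂ ∧ H₂ < G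

/-- Two flags are `i`-adjacent when they differ in exactly one face, of rank `i`. -/
def IAdjacent [PartialOrder α] (rk : α → ℤ) (i : ℤ) (Φ Ψ : Set α) : Prop :=
  ∃ F G, F ∈ Φ ∧ G ∈ Ψ ∧ F ≠ G ∧ rk F = i ∧ rk G = i ∧ Φ \ {F} = Ψ \ {G}

/-- The group of order automorphisms of `α`, as a subgroup of the permutations of `α`. -/
def orderAutGroup (α : Type u) [PartialOrder α] : Subgroup (Equiv.Perm α) where
  carrier := {φ | ∀ a b : α, φ a ≤ φ b ↔ a ≤ b}
  one_mem' := fun _ _ => Iff.rfl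
  mul_mem' := by
    intro f g hf hg a b
    rw [Equiv.Perm.mul_apply, Equiv.Perm.mul_apply]
    exact (hf (g a) (g b)).trans (hg a b)
  inv_mem' := by
    intro f hf a b
    conv_rhs => rw [← f.apply_symm_apply a, ← f.apply_symm_apply b]
    exact (hf _ _).symm

/-- `Λ` is a flag-transitive group of automorphisms. -/
def FlagTransitive [PartialOrder α] (Λ : Subgroup (Equiv.Perm α)) : Prop :=
  ∀ Φ Ψ : Set α, IsMaxChain (· ≤ ·) Φ → IsMaxChain (· ≤ ·) Ψ → ∃ γ ∈ Λ, γ '' Φ = Ψ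

/-- The elementwise stabilizer in `Λ` of a set `Ω` of faces. -/
def stabOf [PartialOrder α] (Λ : Subgroup (Equiv.Perm α)) (Ω : Set α) :
    Subgroup (Equiv.Perm α) where
  carrier := {γ | γ ∈ Λ ∧ ∀ x ∈ Ω, γ x = x}
  one_mem' := ⟨Λ.one_mem, fun _ _ => rfl⟩
  mul_mem' := by
    intro f g hf hg
    refine ⟨Λ.mul_mem hf.1 hg.1, fun x hx => ?_⟩
    rw [Equiv.Perm.mul_apply, hg.2 x hx, hf.2 x hx]
  inv_mem' := by
    intro f hf
    refine ⟨Λ.inv_mem hf.1, fun x hx => ?_⟩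
    simpa using (congrArg (⇑f⁻¹) (hf.2 x hx)).symm

/-- The distinguished subgroup `R_i` of `Λ` relative to a base flag enumerated by
`F : Fin n → α`: the elements of `Λ` fixing every base face `F j` with `j ≠ i`.  For
`i ∉ {0,…,n-1}` (e.g. `i = -1` or `i = n`) this is the stabilizer of the base flag. -/
def distinguishedSubgroup [PartialOrder α] {n : ℕ} (Λ : Subgroup (Equiv.Perm α))
    (F : Fin n → α) (i : ℤ) : Subgroup (Equiv.Perm α) :=
  stabOf Λ {x | ∃ j : Fin n, (j : ℤ) ≠ i ∧ x = F j}

section Aux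

variable [PartialOrder α] {n : ℕ} {rk : α → ℤ}

lemma chain_rk_inj (h : IsIncidenceComplex n rk) {C : Set α}
    (hC : IsChain (· ≤ ·) C) {X Y : α} (hX : X ∈ C) (hY : Y ∈ C)
    (hr : rk X = rk Y) : X = Y := by
  by_contra hne
  rcases hC hX hY hne with hle | hle
  · exact absurd hr (ne_of_lt (h.rk_strictMono (lt_of_le_of_ne hle hne)))
  · exact absurd hr.symm (ne_of_lt (h.rk_strictMono (lt_of_le_of_ne hle (Ne.symm hne))))

lemma aut_lt {γ : Equiv.Perm α} (hγ : γ ∈ orderAutGroup α) {a b : α} (hab : a < b) :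
    γ a < γ b :=
  lt_of_le_of_ne ((hγ a b).mpr hab.le) (fun e => hab.ne (γ.injective e))

lemma aut_image_maxChain {γ : Equiv.Perm α} (hγ : γ ∈ orderAutGroup α) {C : Set α}
    (hC : IsMaxChain (· ≤ ·) C) : IsMaxChain (· ≤ ·) (⇑γ '' C) := by
  have himg : ∀ {σ : Equiv.Perm α}, σ ∈ orderAutGroup α → ∀ {s : Set α},
      IsChain (· ≤ ·) s → IsChain (· ≤ ·) (⇑σ '' s) := by
    rintro σ hσ s hs _ ⟨a, ha, rfl⟩ _ ⟨b, hb, rfl⟩ hne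
    have hab : a ≠ b := fun e => hne (by rw [e])
    rcases hs ha hb hab with h' | h'
    · exact Or.inl ((hσ a b).mpr h')
    · exact Or.inr ((hσ b a).mpr h')
  refine ⟨himg hγ hC.1, ?_⟩
  intro t ht hsub
  have hinv : γ⁻¹ ∈ orderAutGroup α := (orderAutGroup α).inv_mem hγ
  have htc : IsChain (· ≤ ·) (⇑γ⁻¹ '' t) := himg hinv ht
  have hCsub : C ⊆ ⇑γ⁻¹ '' t := by
    intro x hx
    exact ⟨γ x, hsub ⟨x, hx, rfl⟩, by simp⟩
  have hCt := hC.2 htc hCsub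
  rw [hCt, Set.image_image]
  simp

lemma rk_aut (h : IsIncidenceComplex n rk) {γ : Equiv.Perm α}
    (hγ : γ ∈ orderAutGroup α) {C : Set α} (hC : IsMaxChain (· ≤ ·) C)
    {X : α} (hX : X ∈ C) : rk (γ X) = rk X := by
  have key1 : ∀ k : ℕ, ∀ X ∈ C, rk X + 1 = k → rk X ≤ rk (γ X) := by
    intro k
    induction k with
    | zero =>
      intro X hX hk
      have := (h.rk_range (γ X)).1
      omega
    | succ k ih =>
      intro X hX hk
      have h0 : 0 ≤ rk X := by omega
      obtain ⟨Y, hY, hrY⟩ := h.flag_rk C hC (rk X - 1) (by omega)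
        (by have := (h.rk_range X).2; omega)
      have hne : Y ≠ X := fun e => by rw [e] at hrY; omega
      have hYX : Y < X := by
        rcases hC.1 hY hX hne with h' | h'
        · exact lt_of_le_of_ne h' hne
        · exact absurd (h.rk_strictMono (lt_of_le_of_ne h' hne.symm)) (by omega)
      have h1 := ih Y hY (by omega)
      have h2 := h.rk_strictMono (aut_lt hγ hYX)
      omega
  have key2 : ∀ k : ℕ, ∀ X ∈ C, (n : ℤ) - rk X = k → rk (γ X) ≤ rk X := by
    intro k
    induction k with
    | zero =>
      intro X hX hk
      have := (h.rk_range (γ X)).2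
      omega
    | succ k ih =>
      intro X hX hk
      obtain ⟨Y, hY, hrY⟩ := h.flag_rk C hC (rk X + 1)
        (by have := (h.rk_range X).1; omega) (by omega)
      have hne : X ≠ Y := fun e => by rw [← e] at hrY; omega
      have hXY : X < Y := by
        rcases hC.1 hX hY hne with h' | h'
        · exact lt_of_le_of_ne h' hne
        · exact absurd (h.rk_strictMono (lt_of_le_of_ne h' hne.symm)) (by omega)
      have h1 := ih Y hY (by omega)
      have h2 := h.rk_strictMono (aut_lt hγ hXY)
      omega
  have hr := h.rk_range X
  have h1 := key1 (rk X + 1).toNat X hX (by omega)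
  have h2 := key2 ((n : ℤ) - rk X).toNat X hX (by omega)
  omega

end Aux

/-- If `Λ` is a flag-transitive group of automorphisms of a regular incidence
complex of rank `n` with base flag `Φ` containing the faces `F 0, …, F (n-1)` (of ranks
`0,…,n-1`), and `R i` is the stabilizer in `Λ` of `Φ` minus its `i`-face, then `Λ` is
generated by `R 0, …, R (n-1)`. -/
theorem flagTransitive_generated_by_distinguished
    {α : Type u} [PartialOrder α] {n : ℕ} (hn : 0 < n) (rk : α → ℤ)
    (h : IsIncidenceComplex n rk)
    (Λ : Subgroup (Equiv.Perm α)) (hΛ : Λ ≤ orderAutGroup α)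
    (htrans : FlagTransitive Λ)
    (Φ : Set α) (hΦ : IsMaxChain (· ≤ ·) Φ)
    (F : Fin n → α) (hF : ∀ i : Fin n, F i ∈ Φ ∧ rk (F i) = (i : ℤ)) :
    Λ = ⨆ i : Fin n, distinguishedSubgroup Λ F (i : ℤ) := by
  set N := ⨆ i : Fin n, distinguishedSubgroup Λ F (i : ℤ) with hNdef
  have hNle : N ≤ Λ := iSup_le fun i γ hγ => hγ.1
  refine le_antisymm ?_ hNle
  intro γ hγ
  have hγaut : γ ∈ orderAutGroup α := hΛ hγ
  have hγΦ : IsMaxChain (· ≤ ·) (⇑γ '' Φ) := aut_image_maxChain hγaut hΦ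
  have main : ∀ Ψ : Set α,
      Relation.ReflTransGen
        (fun A B => IsMaxChain (· ≤ ·) A ∧ IsMaxChain (· ≤ ·) B ∧
          Φ ∩ (⇑γ '' Φ) ⊆ A ∧ Φ ∩ (⇑γ '' Φ) ⊆ B ∧
          ∃ F G, F ∈ A ∧ G ∈ B ∧ F ≠ G ∧ A \ {F} = B \ {G}) Φ Ψ →
      ∃ δ ∈ N, ⇑δ '' Φ = Ψ := by
    intro Ψ hΨ
    induction hΨ with
    | refl => exact ⟨1, N.one_mem, by simp⟩
    | @tail b c hΦb hrel ih =>
      obtain ⟨δ, hδN, hδΦ⟩ := ih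
      obtain ⟨hA, hB, -, -, F₀, G₀, hF₀A, hG₀B, hFGne, hdiff⟩ := hrel
      have hδΛ : δ ∈ Λ := hNle hδN
      have hδaut : δ ∈ orderAutGroup α := hΛ hδΛ
      have hδ'aut : δ⁻¹ ∈ orderAutGroup α := (orderAutGroup α).inv_mem hδaut
      have hΦA : ⇑δ⁻¹ '' b = Φ := by
        rw [← hδΦ, Set.image_image]; simp
      set Ψ' := ⇑δ⁻¹ '' c with hΨ'def
      have hΨ'max : IsMaxChain (· ≤ ·) Ψ' := aut_image_maxChain hδ'aut hB
      set i : ℤ := rk F₀ with hidef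
      have hF₀rk : rk (δ⁻¹ F₀) = i := rk_aut h hδ'aut hA hF₀A
      have hsub : Φ \ {δ⁻¹ F₀} ⊆ Ψ' := by
        have himg : ⇑δ⁻¹ '' (b \ {F₀}) = Φ \ {δ⁻¹ F₀} := by
          rw [Set.image_diff (δ⁻¹ : Equiv.Perm α).injective, hΦA, Set.image_singleton]
        rw [← himg, hdiff]
        exact Set.image_mono Set.diff_subset
      obtain ⟨ε, hεΛ, hεΦ⟩ := htrans Φ Ψ' hΦ hΨ'max
      have hεaut : ε ∈ orderAutGroup α := hΛ hεΛ
      have hfix : ∀ j : Fin n, (j : ℤ) ≠ i → ε (F j) = F j := by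
        intro j hj
        have hFjΦ := (hF j).1
        have hFjne : F j ≠ δ⁻¹ F₀ := by
          intro e
          exact hj (by rw [← (hF j).2, e, hF₀rk])
        have hFjΨ' : F j ∈ Ψ' := hsub ⟨hFjΦ, hFjne⟩
        have h1 : ε (F j) ∈ Ψ' := by rw [← hεΦ]; exact ⟨F j, hFjΦ, rfl⟩
        have h2 : rk (ε (F j)) = rk (F j) := rk_aut h hεaut hΦ hFjΦ
        exact chain_rk_inj h hΨ'max.1 h1 hFjΨ' h2
      have hεR : ∃ iF : Fin n, ε ∈ distinguishedSubgroup Λ F (iF : ℤ) := by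
        by_cases hcase : 0 ≤ i ∧ i < (n : ℤ)
        · have hlt : i.toNat < n := by omega
          refine ⟨⟨i.toNat, hlt⟩, hεΛ, ?_⟩
          rintro x ⟨j, hj, rfl⟩
          refine hfix j fun e => hj ?_
          simp only [Fin.val_mk] at *
          omega
        · refine ⟨⟨0, hn⟩, hεΛ, ?_⟩
          rintro x ⟨j, hj, rfl⟩
          refine hfix j fun e => ?_
          have := j.isLt
          omega
      obtain ⟨iF, hεRi⟩ := hεR
      have hεN : ε ∈ N :=
        le_iSup (fun i : Fin n => distinguishedSubgroup Λ F (i : ℤ)) iF hεRi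
      refine ⟨δ * ε, N.mul_mem hδN hεN, ?_⟩
      rw [Equiv.Perm.coe_mul, Set.image_comp, hεΦ, hΨ'def, Set.image_image]
      simp
  obtain ⟨δ, hδN, hδΦ⟩ := main (⇑γ '' Φ) (h.strongly_connected Φ (⇑γ '' Φ) hΦ hγΦ)
  have hδΛ : δ ∈ Λ := hNle hδN
  have hσΛ : δ⁻¹ * γ ∈ Λ := Λ.mul_mem (Λ.inv_mem hδΛ) hγ
  have hσaut : δ⁻¹ * γ ∈ orderAutGroup α := hΛ hσΛ
  have hσΦ : ⇑(δ⁻¹ * γ) '' Φ = Φ := by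
    rw [Equiv.Perm.coe_mul, Set.image_comp, ← hδΦ, Set.image_image]
    simp
  have hσR : δ⁻¹ * γ ∈ distinguishedSubgroup Λ F (((⟨0, hn⟩ : Fin n) : ℤ)) := by
    refine ⟨hσΛ, ?_⟩
    rintro x ⟨j, hj, rfl⟩
    have h1 : (δ⁻¹ * γ) (F j) ∈ Φ := by
      rw [← hσΦ]; exact ⟨F j, (hF j).1, rfl⟩
    have h2 : rk ((δ⁻¹ * γ) (F j)) = rk (F j) := rk_aut h hσaut hΦ (hF j).1
    exact chain_rk_inj h hΦ.1 h1 (hF j).1 h2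
  have hσN : δ⁻¹ * γ ∈ N :=
    le_iSup (fun i : Fin n => distinguishedSubgroup Λ F (i : ℤ)) (⟨0, hn⟩ : Fin n) hσR
  have hγeq : γ = δ * (δ⁻¹ * γ) := by group
  rw [hγeq]
  exact N.mul_mem hδN hσN
end

section
/- With notation as in the structure theory of flag-transitive subgroups of a regular incidence complex: for -1 ≤ i < j-1 ≤ n-1, the subgroups R_i and R_j of Λ satisfy R_i · R_j = R_j · R_i as products of subsets of Λ (equivalently, R_i R_j is a subgroup). -/
open scoped Pointwise

universe u

variable {α : Type u}

section Aux

variable {n : ℕ} {rk : α → ℤ}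

private lemma IC.chain_unique [PartialOrder α] (h : IsIncidenceComplex n rk)
    {Ψ : Set α} (hΨ : IsChain (· ≤ ·) Ψ) {x y : α}
    (hx : x ∈ Ψ) (hy : y ∈ Ψ) (hxy : rk x = rk y) : x = y := by
  by_contra hne
  rcases hΨ hx hy hne with h1 | h1
  · have := h.rk_strictMono (lt_of_le_of_ne h1 hne); omega
  · have := h.rk_strictMono (lt_of_le_of_ne h1 (Ne.symm hne)); omega

private lemma IC.chain_le [PartialOrder α] (h : IsIncidenceComplex n rk)
    {Ψ : Set α} (hΨ : IsChain (· ≤ ·) Ψ) {x y : α}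
    (hx : x ∈ Ψ) (hy : y ∈ Ψ) (hxy : rk x ≤ rk y) : x ≤ y := by
  rcases eq_or_ne x y with rfl | hne
  · exact le_rfl
  rcases hΨ hx hy hne with h1 | h1
  · exact h1
  · exact absurd (h.rk_strictMono (lt_of_le_of_ne h1 hne.symm)) (by omega)

private lemma IC.aut_lt [PartialOrder α] {φ : Equiv.Perm α}
    (hφ : φ ∈ orderAutGroup α) {x y : α} : φ x < φ y ↔ x < y := by
  constructor
  · intro h1
    exact lt_of_le_of_ne ((hφ x y).mp h1.le) (fun e => h1.ne (congrArg φ e))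
  · intro h1
    exact lt_of_le_of_ne ((hφ x y).mpr h1.le) (fun e => h1.ne (φ.injective e))

private lemma IC.aut_flag [PartialOrder α] {φ : Equiv.Perm α}
    (hφ : φ ∈ orderAutGroup α) {Ψ : Set α} (hΨ : IsMaxChain (· ≤ ·) Ψ) :
    IsMaxChain (· ≤ ·) (φ '' Ψ) := by
  constructor
  · rintro _ ⟨x, hx, rfl⟩ _ ⟨y, hy, rfl⟩ hne
    have hxy : x ≠ y := fun e => hne (by rw [e])
    rcases hΨ.1 hx hy hxy with h1 | h1
    · exact Or.inl ((hφ x y).mpr h1)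
    · exact Or.inr ((hφ y x).mpr h1)
  · intro t ht hsub
    have h2 : IsChain (· ≤ ·) (⇑φ⁻¹ '' t) := by
      rintro _ ⟨x, hx, rfl⟩ _ ⟨y, hy, rfl⟩ hne
      have hxy : x ≠ y := fun e => hne (by rw [e])
      have key : ∀ u v : α, u ≤ v → φ⁻¹ u ≤ φ⁻¹ v := by
        intro u v huv
        have := (hφ (φ⁻¹ u) (φ⁻¹ v)).mp
        simp only [Equiv.Perm.inv_def, Equiv.apply_symm_apply] at this
        exact this huv
      rcases ht hx hy hxy with h1 | h1
      · exact Or.inl (key _ _ h1)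
      · exact Or.inr (key _ _ h1)
    have hsub2 : Ψ ⊆ ⇑φ⁻¹ '' t := fun x hx => ⟨φ x, hsub ⟨x, hx, rfl⟩, by simp⟩
    have heq := hΨ.2 h2 hsub2
    rw [heq, Set.image_image]
    simp

private lemma IC.card_Icc_int (a b : ℤ) :
    Nat.card (Set.Icc a b) = (b + 1 - a).toNat := by
  rw [Nat.card_eq_fintype_card, ← Set.toFinset_card, Set.toFinset_Icc, Int.card_Icc]

private lemma IC.below_card [PartialOrder α] (h : IsIncidenceComplex n rk)
    {Ψ : Set α} (hΨ : IsMaxChain (· ≤ ·) Ψ) {x : α} (hx : x ∈ Ψ) :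
    Nat.card {y : α // y ∈ Ψ ∧ y < x} = (rk x + 1).toNat := by
  have e : {y : α // y ∈ Ψ ∧ y < x} ≃ Set.Icc (-1 : ℤ) (rk x - 1) := by
    refine Equiv.ofBijective
      (fun y => ⟨rk y.1, (h.rk_range y.1).1, by
        have := h.rk_strictMono y.2.2; omega⟩) ⟨?_, ?_⟩
    · intro y z hyz
      exact Subtype.ext (IC.chain_unique h hΨ.1 y.2.1 z.2.1
        (congrArg Subtype.val hyz))
    · rintro ⟨r, hr1, hr2⟩
      have hxn := (h.rk_range x).2
      obtain ⟨w, hw, hwr⟩ := h.flag_rk Ψ hΨ r hr1 (by omega)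
      have hwx : w < x := by
        refine lt_of_le_of_ne (IC.chain_le h hΨ.1 hw hx (by omega)) ?_
        intro e; rw [e] at hwr; omega
      exact ⟨⟨w, hw, hwx⟩, Subtype.ext hwr⟩
  rw [Nat.card_congr e, IC.card_Icc_int]
  congr 1
  ring

private lemma IC.aut_rk [PartialOrder α] (h : IsIncidenceComplex n rk)
    {φ : Equiv.Perm α} (hφ : φ ∈ orderAutGroup α) (x : α) : rk (φ x) = rk x := by
  obtain ⟨Ψ, hΨ, hxΨ⟩ := (IsChain.singleton (r := (· ≤ ·)) (a := x)).exists_maxChain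
  have hx : x ∈ Ψ := hxΨ rfl
  have h1 := IC.below_card h hΨ hx
  have hφΨ := IC.aut_flag hφ hΨ
  have h2 := IC.below_card h hφΨ (⟨x, hx, rfl⟩ : φ x ∈ φ '' Ψ)
  have e : {y : α // y ∈ Ψ ∧ y < x} ≃ {y : α // y ∈ φ '' Ψ ∧ y < φ x} :=
    { toFun := fun y => ⟨φ y.1, ⟨y.1, y.2.1, rfl⟩, (IC.aut_lt hφ).mpr y.2.2⟩
      invFun := fun y => ⟨φ⁻¹ y.1, by
          obtain ⟨z, hz, hze⟩ := y.2.1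
          rw [← hze]; simpa using hz, by
          have : φ (φ⁻¹ y.1) < φ x := by simpa using y.2.2
          exact (IC.aut_lt hφ).mp this⟩
      left_inv := fun y => Subtype.ext (by simp)
      right_inv := fun y => Subtype.ext (by simp) }
  have := (Nat.card_congr e).trans h2
  rw [h1] at this
  have b1 := (h.rk_range x).1
  have b2 := (h.rk_range (φ x)).1
  omega

private lemma IC.fix_bot [PartialOrder α] {φ : Equiv.Perm α}
    (hφ : φ ∈ orderAutGroup α) {B : α} (hB : ∀ G : α, B ≤ G) : φ B = B := by
  refine le_antisymm ?_ (hB _)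
  have := (hφ B (φ⁻¹ B)).mpr (hB _)
  simpa using this

private lemma IC.fix_top [PartialOrder α] {φ : Equiv.Perm α}
    (hφ : φ ∈ orderAutGroup α) {T : α} (hT : ∀ G : α, G ≤ T) : φ T = T := by
  refine le_antisymm (hT _) ?_
  have := (hφ (φ⁻¹ T) T).mpr (hT _)
  simpa using this

private lemma IC.mem_of_extreme [PartialOrder α] {Φ : Set α}
    (hΦ : IsMaxChain (· ≤ ·) Φ) {B : α} (hB : (∀ G : α, B ≤ G) ∨ (∀ G : α, G ≤ B)) :
    B ∈ Φ := by
  have hchain : IsChain (· ≤ ·) (insert B Φ) := by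
    refine hΦ.1.insert fun b hb _ => ?_
    rcases hB with hB | hB
    · exact Or.inl (hB b)
    · exact Or.inr (hB b)
  have := hΦ.2 hchain (Set.subset_insert _ _)
  rw [this]; exact Set.mem_insert _ _

private lemma IC.maxchain_of_ranks [PartialOrder α] (h : IsIncidenceComplex n rk)
    {t : Set α} (ht : IsChain (· ≤ ·) t)
    (hr : ∀ r : ℤ, -1 ≤ r → r ≤ (n : ℤ) → ∃ w ∈ t, rk w = r) :
    IsMaxChain (· ≤ ·) t := by
  refine ⟨ht, fun s hs hsub => ?_⟩
  refine Set.Subset.antisymm hsub fun z hz => ?_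
  obtain ⟨w, hw, hwr⟩ := hr (rk z) (h.rk_range z).1 (h.rk_range z).2
  have : z = w := IC.chain_unique h hs hz (hsub hw) hwr.symm
  exact this ▸ hw

private lemma IC.mem_distinguished [PartialOrder α] {Λ : Subgroup (Equiv.Perm α)}
    {F : Fin n → α} {c : ℤ} {γ : Equiv.Perm α} :
    γ ∈ distinguishedSubgroup Λ F c ↔
      γ ∈ Λ ∧ ∀ k : Fin n, (k : ℤ) ≠ c → γ (F k) = F k := by
  constructor
  · rintro ⟨h1, h2⟩
    exact ⟨h1, fun k hk => h2 (F k) ⟨k, hk, rfl⟩⟩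
  · rintro ⟨h1, h2⟩
    refine ⟨h1, ?_⟩
    rintro x ⟨k, hk, rfl⟩
    exact h2 k hk

private lemma IC.key [PartialOrder α] (h : IsIncidenceComplex n rk)
    (Λ : Subgroup (Equiv.Perm α)) (hΛ : Λ ≤ orderAutGroup α)
    (htrans : FlagTransitive Λ)
    (Φ : Set α) (hΦ : IsMaxChain (· ≤ ·) Φ)
    (F : Fin n → α) (hF : ∀ i : Fin n, F i ∈ Φ ∧ rk (F i) = (i : ℤ))
    (a b : ℤ) (ha1 : -1 ≤ a) (ha2 : a ≤ (n : ℤ))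
    (hb1 : b ≠ a - 1) (hb2 : b ≠ a) (hb3 : b ≠ a + 1)
    (γ : Equiv.Perm α) (hγΛ : γ ∈ Λ)
    (hγ : ∀ k : Fin n, (k : ℤ) ≠ a → (k : ℤ) ≠ b → γ (F k) = F k) :
    γ ∈ (distinguishedSubgroup Λ F a : Set (Equiv.Perm α))
        * (distinguishedSubgroup Λ F b : Set (Equiv.Perm α)) := by
  have hγaut := hΛ hγΛ
  obtain ⟨B, hBrk, hBle⟩ := h.exists_bot
  obtain ⟨T, hTrk, hTle⟩ := h.exists_top
  -- γ fixes every face of Φ whose rank is neither a nor b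
  have hfix : ∀ x ∈ Φ, rk x ≠ a → rk x ≠ b → γ x = x := by
    intro x hx hxa hxb
    have hr := h.rk_range x
    by_cases hm1 : rk x = -1
    · have hBΦ : B ∈ Φ := IC.mem_of_extreme hΦ (Or.inl hBle)
      have : x = B := IC.chain_unique h hΦ.1 hx hBΦ (by omega)
      rw [this]; exact IC.fix_bot hγaut hBle
    by_cases hmn : rk x = (n : ℤ)
    · have hTΦ : T ∈ Φ := IC.mem_of_extreme hΦ (Or.inr hTle)
      have : x = T := IC.chain_unique h hΦ.1 hx hTΦ (by omega)
      rw [this]; exact IC.fix_top hγaut hTle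
    · have hk : (rk x).toNat < n := by omega
      set k : Fin n := ⟨(rk x).toNat, hk⟩ with hkdef
      have hkx : x = F k := by
        refine IC.chain_unique h hΦ.1 hx (hF k).1 ?_
        rw [(hF k).2]; simp [hkdef]; omega
      have hkr : (k : ℤ) = rk x := by simp [hkdef]; omega
      rw [hkx]
      exact hγ k (by omega) (by omega)
  -- the rank-a face of Φ
  obtain ⟨xa, hxaΦ, hxark⟩ := h.flag_rk Φ hΦ a ha1 ha2
  have hγΦ := IC.aut_flag hγaut hΦ
  have hγxark : rk (γ xa) = a := by rw [IC.aut_rk h hγaut, hxark]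
  -- the modified flag
  set Ψ' : Set α := (Φ \ {xa}) ∪ {γ xa} with hΨ'def
  have hrkne : ∀ u ∈ Φ \ {xa}, rk u ≠ a := by
    rintro u ⟨huΦ, hune⟩ he
    exact hune (IC.chain_unique h hΦ.1 huΦ hxaΦ (by omega))
  have hcomp : ∀ u ∈ Φ \ {xa}, u ≤ γ xa ∨ γ xa ≤ u := by
    rintro u hu
    have hune := hrkne u hu
    have hru := h.rk_range u
    rcases lt_or_gt_of_ne hune with hlt | hgt
    · -- rk u < a : go through the rank-(a-1) face
      obtain ⟨w, hwΦ, hwr⟩ := h.flag_rk Φ hΦ (a - 1) (by omega) (by omega)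
      have hw1 : u ≤ w := IC.chain_le h hΦ.1 hu.1 hwΦ (by omega)
      have hwfix : γ w = w := hfix w hwΦ (by omega) (by omega)
      have hw2 : w ≤ γ xa := by
        refine IC.chain_le h hγΦ.1 ?_ ⟨xa, hxaΦ, rfl⟩ ?_
        · exact ⟨w, hwΦ, hwfix⟩
        · rw [IC.aut_rk h hγaut, hwr, hxark]; omega
      exact Or.inl (hw1.trans hw2)
    · -- rk u > a : go through the rank-(a+1) face
      obtain ⟨w, hwΦ, hwr⟩ := h.flag_rk Φ hΦ (a + 1) (by omega) (by omega)
      have hw1 : w ≤ u := IC.chain_le h hΦ.1 hwΦ hu.1 (by omega)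
      have hwfix : γ w = w := hfix w hwΦ (by omega) (by omega)
      have hw2 : γ xa ≤ w := by
        refine IC.chain_le h hγΦ.1 ⟨xa, hxaΦ, rfl⟩ ?_ ?_
        · exact ⟨w, hwΦ, hwfix⟩
        · rw [IC.aut_rk h hγaut, hwr, hxark]; omega
      exact Or.inr (hw2.trans hw1)
  have hchain : IsChain (· ≤ ·) Ψ' := by
    rintro u hu v hv hne
    rcases hu with hu | hu <;> rcases hv with hv | hv
    · exact hΦ.1 hu.1 hv.1 hne
    · rw [Set.mem_singleton_iff] at hv; subst hv
      exact hcomp u hu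
    · rw [Set.mem_singleton_iff] at hu; subst hu
      exact (hcomp v hv).symm.imp (fun h' => h') (fun h' => h')
    · rw [Set.mem_singleton_iff] at hu hv
      exact absurd (hu.trans hv.symm) hne
  have hranks : ∀ r : ℤ, -1 ≤ r → r ≤ (n : ℤ) → ∃ w ∈ Ψ', rk w = r := by
    intro r hr1 hr2
    by_cases hra : r = a
    · exact ⟨γ xa, Or.inr rfl, by rw [hγxark, hra]⟩
    · obtain ⟨w, hwΦ, hwr⟩ := h.flag_rk Φ hΦ r hr1 hr2
      refine ⟨w, Or.inl ⟨hwΦ, ?_⟩, hwr⟩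
      intro he
      rw [Set.mem_singleton_iff] at he; subst he
      omega
  have hΨ' : IsMaxChain (· ≤ ·) Ψ' := IC.maxchain_of_ranks h hchain hranks
  obtain ⟨τ, hτΛ, hτΦ⟩ := htrans Φ Ψ' hΦ hΨ'
  have hτaut := hΛ hτΛ
  have hτfix : ∀ x ∈ Φ, rk x ≠ a → τ x = x := by
    intro x hx hxa
    have h1 : τ x ∈ Ψ' := hτΦ ▸ ⟨x, hx, rfl⟩
    have h2 : x ∈ Ψ' := Or.inl ⟨hx, fun he => hxa (by
      rw [Set.mem_singleton_iff] at he; rw [he, hxark])⟩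
    exact IC.chain_unique h hΨ'.1 h1 h2 (IC.aut_rk h hτaut x)
  have hτxa : τ xa = γ xa := by
    have h1 : τ xa ∈ Ψ' := hτΦ ▸ ⟨xa, hxaΦ, rfl⟩
    have h2 : γ xa ∈ Ψ' := Or.inr rfl
    exact IC.chain_unique h hΨ'.1 h1 h2
      (by rw [IC.aut_rk h hτaut, IC.aut_rk h hγaut])
  refine Set.mem_mul.mpr ⟨τ, ?_, τ⁻¹ * γ, ?_, by group⟩
  · refine SetLike.mem_coe.mpr (IC.mem_distinguished.mpr ⟨hτΛ, fun k hk => ?_⟩)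
    exact hτfix (F k) (hF k).1 (by rw [(hF k).2]; exact hk)
  · refine SetLike.mem_coe.mpr (IC.mem_distinguished.mpr
      ⟨Λ.mul_mem (Λ.inv_mem hτΛ) hγΛ, fun k hk => ?_⟩)
    by_cases hka : (k : ℤ) = a
    · have hxaF : F k = xa :=
        IC.chain_unique h hΦ.1 (hF k).1 hxaΦ (by rw [(hF k).2, hka, hxark])
      show τ⁻¹ (γ (F k)) = F k
      rw [hxaF, ← hτxa]
      simp
    · show τ⁻¹ (γ (F k)) = F k
      rw [hγ k hka hk]
      have := hτfix (F k) (hF k).1 (by rw [(hF k).2]; exact hka)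
      simp [Equiv.Perm.inv_def, Equiv.symm_apply_eq, this]

end Aux

/-- For `-1 ≤ i < j - 1 ≤ n - 1`, the distinguished subgroups `R i` and
`R j` of a flag-transitive group `Λ` of automorphisms of a regular incidence complex
satisfy `R i · R j = R j · R i` as products of subsets of `Λ`. -/
theorem distinguished_subgroups_products_commute
    {α : Type u} [PartialOrder α] {n : ℕ} (rk : α → ℤ)
    (h : IsIncidenceComplex n rk)
    (Λ : Subgroup (Equiv.Perm α)) (hΛ : Λ ≤ orderAutGroup α)
    (htrans : FlagTransitive Λ)
    (Φ : Set α) (hΦ : IsMaxChain (· ≤ ·) Φ)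
    (F : Fin n → α) (hF : ∀ i : Fin n, F i ∈ Φ ∧ rk (F i) = (i : ℤ))
    (i j : ℤ) (hi : -1 ≤ i) (hij : i < j - 1) (hj : j - 1 ≤ n - 1) :
    (distinguishedSubgroup Λ F i : Set (Equiv.Perm α))
          * (distinguishedSubgroup Λ F j : Set (Equiv.Perm α))
      = (distinguishedSubgroup Λ F j : Set (Equiv.Perm α))
          * (distinguishedSubgroup Λ F i : Set (Equiv.Perm α)) := by
  have hn : (0 : ℤ) ≤ (n : ℤ) := Int.natCast_nonneg n
  apply Set.Subset.antisymm
  · rintro γ hγ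
    obtain ⟨σ, hσ, τ, hτ, rfl⟩ := Set.mem_mul.mp hγ
    obtain ⟨hσΛ, hσfix⟩ := IC.mem_distinguished.mp (SetLike.mem_coe.mp hσ)
    obtain ⟨hτΛ, hτfix⟩ := IC.mem_distinguished.mp (SetLike.mem_coe.mp hτ)
    refine IC.key h Λ hΛ htrans Φ hΦ F hF j i (by omega) (by omega)
      (by omega) (by omega) (by omega) (σ * τ) (Λ.mul_mem hσΛ hτΛ) ?_
    intro k hkj hki
    show σ (τ (F k)) = F k
    rw [hτfix k hkj, hσfix k hki]
  · rintro γ hγ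
    obtain ⟨τ, hτ, σ, hσ, rfl⟩ := Set.mem_mul.mp hγ
    obtain ⟨hτΛ, hτfix⟩ := IC.mem_distinguished.mp (SetLike.mem_coe.mp hτ)
    obtain ⟨hσΛ, hσfix⟩ := IC.mem_distinguished.mp (SetLike.mem_coe.mp hσ)
    refine IC.key h Λ hΛ htrans Φ hΦ F hF i j (by omega) (by omega)
      (by omega) (by omega) (by omega) (τ * σ) (Λ.mul_mem hτΛ hσΛ) ?_
    intro k hki hkj
    show τ (σ (F k)) = F k
    rw [hσfix k hki, hτfix k hkj]
end

section
/- With notation as in the structure theory of flag-transitive subgroups of a regular incidence complex: for subsets I, J of {-1,0,...,n}, the intersection property ⟨R_i : i ∈ I⟩ ∩ ⟨R_i : i ∈ J⟩ = ⟨R_i : i ∈ I ∩ J⟩ holds, where by convention the subgroup generated by the empty set of indices is taken to be the flag stabilizer R_{-1} = Λ_Φ. -/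
universe u

variable {α : Type u}

section Aux

variable {α : Type u} [PartialOrder α] {n : ℕ} {rk : α → ℤ}

lemma mem_maxChain_of_forall_le {Ψ : Set α} (hΨ : IsMaxChain (· ≤ ·) Ψ)
    {B : α} (hB : ∀ F : α, B ≤ F) : B ∈ Ψ := by
  have : Ψ = insert B Ψ := hΨ.2 (hΨ.1.insert (fun y _ _ => Or.inl (hB y)))
    (Set.subset_insert _ _)
  rw [this]; exact Set.mem_insert _ _

lemma mem_maxChain_of_forall_ge {Ψ : Set α} (hΨ : IsMaxChain (· ≤ ·) Ψ)
    {T : α} (hT : ∀ F : α, F ≤ T) : T ∈ Ψ := by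
  have : Ψ = insert T Ψ := hΨ.2 (hΨ.1.insert (fun y _ _ => Or.inr (hT y)))
    (Set.subset_insert _ _)
  rw [this]; exact Set.mem_insert _ _

lemma rank_unique (h : IsIncidenceComplex n rk) {Ψ : Set α} (hΨ : IsMaxChain (· ≤ ·) Ψ)
    {x y : α} (hx : x ∈ Ψ) (hy : y ∈ Ψ) (hr : rk x = rk y) : x = y := by
  by_contra hne
  rcases hΨ.1 hx hy hne with hle | hle
  · exact absurd hr (ne_of_lt (h.rk_strictMono (lt_of_le_of_ne hle hne)))
  · exact absurd hr.symm (ne_of_lt (h.rk_strictMono (lt_of_le_of_ne hle (Ne.symm hne))))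

/-- Image of a maximal chain under an order automorphism is a maximal chain. -/
lemma image_maxChain {γ : Equiv.Perm α} (hγ : γ ∈ orderAutGroup α)
    {Ψ : Set α} (hΨ : IsMaxChain (· ≤ ·) Ψ) : IsMaxChain (· ≤ ·) (γ '' Ψ) := by
  constructor
  · rintro _ ⟨x, hx, rfl⟩ _ ⟨y, hy, rfl⟩ hne
    have hxy : x ≠ y := fun e => hne (by rw [e])
    rcases hΨ.1 hx hy hxy with hle | hle
    · exact Or.inl ((hγ x y).mpr hle)
    · exact Or.inr ((hγ y x).mpr hle)
  · intro s hs hsub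
    have hγi : γ⁻¹ ∈ orderAutGroup α := (orderAutGroup α).inv_mem hγ
    have h1 : Ψ ⊆ ⇑γ⁻¹ '' s := by
      intro x hx
      exact ⟨γ x, hsub ⟨x, hx, rfl⟩, Equiv.symm_apply_apply γ x⟩
    have h2 : IsChain (· ≤ ·) (⇑γ⁻¹ '' s) := by
      rintro _ ⟨x, hx, rfl⟩ _ ⟨y, hy, rfl⟩ hne
      have hxy : x ≠ y := fun e => hne (by rw [e])
      rcases hs hx hy hxy with hle | hle
      · exact Or.inl ((hγi x y).mpr hle)
      · exact Or.inr ((hγi y x).mpr hle)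
    have := hΨ.2 h2 h1
    rw [this, Set.image_image]
    simp only [Equiv.Perm.inv_def, Equiv.apply_symm_apply, Set.image_id']
end Aux
section Aux2

variable {α : Type u} [PartialOrder α] {n : ℕ} {rk : α → ℤ}

lemma ncard_lt_eq (h : IsIncidenceComplex n rk) {Ψ : Set α} (hΨ : IsMaxChain (· ≤ ·) Ψ)
    {x : α} (hx : x ∈ Ψ) : {y ∈ Ψ | y < x}.ncard = (rk x + 1).toNat := by
  have himg : rk '' {y ∈ Ψ | y < x} = Set.Icc (-1 : ℤ) (rk x - 1) := by
    ext k
    constructor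
    · rintro ⟨y, ⟨hyΨ, hylt⟩, rfl⟩
      exact ⟨(h.rk_range y).1, by have := h.rk_strictMono hylt; omega⟩
    · rintro ⟨hk1, hk2⟩
      have hkn : k ≤ (n : ℤ) := le_trans hk2 (by have := (h.rk_range x).2; omega)
      obtain ⟨y, hyΨ, hyk⟩ := h.flag_rk Ψ hΨ k hk1 hkn
      refine ⟨y, ⟨hyΨ, ?_⟩, hyk⟩
      have hne : y ≠ x := fun e => by subst e; omega
      rcases hΨ.1 hyΨ hx hne with hle | hle
      · exact lt_of_le_of_ne hle hne
      · exact absurd (h.rk_strictMono (lt_of_le_of_ne hle (Ne.symm hne))) (by omega)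
  have hinj : Set.InjOn rk {y ∈ Ψ | y < x} :=
    fun a ha b hb hab => rank_unique h hΨ ha.1 hb.1 hab
  have := Set.ncard_image_of_injOn hinj
  rw [himg] at this
  rw [← this, ← Finset.coe_Icc, Set.ncard_coe_finset, Int.card_Icc]
  omega

/-- Order automorphisms preserve ranks of faces in a maximal chain. -/
lemma rk_apply (h : IsIncidenceComplex n rk) {γ : Equiv.Perm α} (hγ : γ ∈ orderAutGroup α)
    {Ψ : Set α} (hΨ : IsMaxChain (· ≤ ·) Ψ) {x : α} (hx : x ∈ Ψ) : rk (γ x) = rk x := by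
  have hΨ' := image_maxChain hγ hΨ
  have hx' : γ x ∈ γ '' Ψ := ⟨x, hx, rfl⟩
  have h1 := ncard_lt_eq h hΨ hx
  have h2 := ncard_lt_eq h hΨ' hx'
  have hset : {y ∈ γ '' Ψ | y < γ x} = γ '' {y ∈ Ψ | y < x} := by
    ext z
    constructor
    · rintro ⟨⟨w, hwΨ, rfl⟩, hlt⟩
      refine ⟨w, ⟨hwΨ, ?_⟩, rfl⟩
      exact lt_of_le_of_ne ((hγ w x).mp hlt.le) (fun e => absurd (by rw [e]) hlt.ne)
    · rintro ⟨w, ⟨hwΨ, hlt⟩, rfl⟩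
      exact ⟨⟨w, hwΨ, rfl⟩, lt_of_le_of_ne ((hγ w x).mpr hlt.le)
        (fun e => absurd (γ.injective e) hlt.ne)⟩
  rw [hset, Set.ncard_image_of_injOn (γ.injective.injOn), h1] at h2
  have := (h.rk_range (γ x)).1
  have := (h.rk_range x).1
  omega

end Aux2
section Main

variable {α : Type u} [PartialOrder α] {n : ℕ} {rk : α → ℤ}

lemma mem_stabOf {Λ : Subgroup (Equiv.Perm α)} {Ω : Set α} {γ : Equiv.Perm α} :
    γ ∈ stabOf Λ Ω ↔ γ ∈ Λ ∧ ∀ x ∈ Ω, γ x = x := Iff.rfl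

lemma stabOf_le {Λ : Subgroup (Equiv.Perm α)} {Ω : Set α} : stabOf Λ Ω ≤ Λ :=
  fun _ hγ => hγ.1

/-- The subgroup generated by the `R_i`, `i ∈ {-1} ∪ I`, is the pointwise stabilizer of
the base faces `F j` with `j ∉ I`. -/
lemma sup_distinguished_eq_stab (h : IsIncidenceComplex n rk)
    (Λ : Subgroup (Equiv.Perm α)) (hΛ : Λ ≤ orderAutGroup α) (htrans : FlagTransitive Λ)
    (Φ : Set α) (hΦ : IsMaxChain (· ≤ ·) Φ)
    (F : Fin n → α) (hF : ∀ i : Fin n, F i ∈ Φ ∧ rk (F i) = (i : ℤ)) (I : Set ℤ) :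
    (⨆ i ∈ insert (-1 : ℤ) I, distinguishedSubgroup Λ F i)
      = stabOf Λ {x | ∃ j : Fin n, (j : ℤ) ∉ I ∧ x = F j} := by
  set ΛI := ⨆ i ∈ insert (-1 : ℤ) I, distinguishedSubgroup Λ F i with hΛI
  have hΛIle : ΛI ≤ Λ := by
    refine iSup₂_le fun i _ => stabOf_le
  apply le_antisymm
  · refine iSup₂_le fun i hi γ hγ => ?_
    refine ⟨hγ.1, ?_⟩
    rintro x ⟨j, hjI, rfl⟩
    apply hγ.2
    rcases Set.mem_insert_iff.mp hi with rfl | hiI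
    · exact ⟨j, by omega, rfl⟩
    · exact ⟨j, fun e => hjI (e ▸ hiI), rfl⟩
  · intro γ hγ
    obtain ⟨hγΛ, hγfix⟩ := hγ
    have hγaut : γ ∈ orderAutGroup α := hΛ hγΛ
    have hγΦ : IsMaxChain (· ≤ ·) (⇑γ '' Φ) := image_maxChain hγaut hΦ
    -- every base face indexed outside I lies in Φ ∩ γΦ
    have hcap : ∀ j : Fin n, (j : ℤ) ∉ I → F j ∈ Φ ∩ ⇑γ '' Φ := by
      intro j hj
      exact ⟨(hF j).1, ⟨F j, (hF j).1, hγfix _ ⟨j, hj, rfl⟩⟩⟩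
    have hconn := h.strongly_connected Φ (⇑γ '' Φ) hΦ hγΦ
    -- main induction along the flag-connecting sequence
    have key : ∀ Ψ : Set α, Relation.ReflTransGen
        (fun A B => IsMaxChain (· ≤ ·) A ∧ IsMaxChain (· ≤ ·) B ∧
          Φ ∩ ⇑γ '' Φ ⊆ A ∧ Φ ∩ ⇑γ '' Φ ⊆ B ∧
          ∃ G G', G ∈ A ∧ G' ∈ B ∧ G ≠ G' ∧ A \ {G} = B \ {G'}) Φ Ψ →
        ∃ δ ∈ ΛI, ⇑δ '' Φ = Ψ := by
      intro Ψ hΨconn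
      induction hΨconn with
      | refl => exact ⟨1, one_mem _, by simp⟩
      | @tail b c hab hbc ih =>
        obtain ⟨δ, hδ, hδΦ⟩ := ih
        obtain ⟨hb, hc, hsubb, hsubc, G, G', hGb, hG'c, hGne, hdiff⟩ := hbc
        have hδΛ : δ ∈ Λ := hΛIle hδ
        have hδaut : δ ∈ orderAutGroup α := hΛ hδΛ
        have hδiaut : δ⁻¹ ∈ orderAutGroup α := (orderAutGroup α).inv_mem hδaut
        -- G is not in c
        have hGnc : G ∉ c := by
          intro hGc
          have : G ∈ c \ {G'} := ⟨hGc, hGne⟩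
          rw [← hdiff] at this
          exact this.2 rfl
        -- the rank of G lies in I and in [0, n-1]
        set i := rk G with hi
        have hir := h.rk_range G
        have hin1 : i ≠ -1 := by
          intro hieq
          obtain ⟨B, hBrk, hBle⟩ := h.exists_bot
          have hBb : B ∈ b := mem_maxChain_of_forall_le hb hBle
          have : G = B := rank_unique h hb hGb hBb (by omega)
          exact hGnc (this ▸ mem_maxChain_of_forall_le hc hBle)
        have hinn : i ≠ (n : ℤ) := by
          intro hieq
          obtain ⟨T, hTrk, hTle⟩ := h.exists_top
          have hTb : T ∈ b := mem_maxChain_of_forall_ge hb hTle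
          have : G = T := rank_unique h hb hGb hTb (by omega)
          exact hGnc (this ▸ mem_maxChain_of_forall_ge hc hTle)
        have hilt : 0 ≤ i ∧ i < (n : ℤ) := by omega
        set j' : Fin n := ⟨i.toNat, by omega⟩ with hj'
        have hj'i : (j' : ℤ) = i := by simp [hj']; omega
        have hiI : i ∈ I := by
          by_contra hiI
          have hFj' : F j' ∈ b := hsubb (hcap j' (hj'i ▸ hiI))
          have : G = F j' := rank_unique h hb hGb hFj' (by rw [(hF j').2, hj'i])
          exact hGnc (this ▸ hsubc (hcap j' (hj'i ▸ hiI)))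
        -- transport back to the base flag
        have hδib : ⇑δ⁻¹ '' b = Φ := by
          rw [← hδΦ, Set.image_image]; simp
        set Ψ' := ⇑δ⁻¹ '' c with hΨ'
        have hΨ'mc : IsMaxChain (· ≤ ·) Ψ' := image_maxChain hδiaut hc
        have hδGΦ : δ⁻¹ G ∈ Φ := hδib ▸ ⟨G, hGb, rfl⟩
        have hδGrk : rk (δ⁻¹ G) = i := rk_apply h hδiaut hb hGb
        have hδGeq : δ⁻¹ G = F j' := by
          refine rank_unique h hΦ hδGΦ (hF j').1 ?_
          rw [hδGrk, (hF j').2, hj'i]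
        have hdiff' : Φ \ {F j'} = Ψ' \ {δ⁻¹ G'} := by
          have := congrArg (Set.image ⇑δ⁻¹) hdiff
          rwa [Set.image_diff (δ⁻¹).injective, Set.image_diff (δ⁻¹).injective,
            Set.image_singleton, Set.image_singleton, hδib, hδGeq, ← hΨ'] at this
        -- a flag-transitive element sending Φ to Ψ' lies in R i
        obtain ⟨τ, hτΛ, hτΦ⟩ := htrans Φ Ψ' hΦ hΨ'mc
        have hτR : τ ∈ distinguishedSubgroup Λ F i := by
          refine ⟨hτΛ, ?_⟩
          rintro x ⟨m, hm, rfl⟩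
          have h1 : τ (F m) ∈ Ψ' := hτΦ ▸ ⟨F m, (hF m).1, rfl⟩
          have h2 : rk (τ (F m)) = (m : ℤ) := by
            rw [rk_apply h (hΛ hτΛ) hΦ (hF m).1, (hF m).2]
          have h3 : F m ∈ Ψ' := by
            have hne : F m ≠ F j' := by
              intro e
              apply hm
              rw [← hj'i, ← (hF j').2, ← e, (hF m).2]
            have h4 : F m ∈ Φ \ {F j'} := ⟨(hF m).1, hne⟩
            rw [hdiff'] at h4
            exact h4.1
          exact rank_unique h hΨ'mc h1 h3 (h2.trans (hF m).2.symm)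
        have hτI : τ ∈ ΛI :=
          le_iSup₂ (f := fun k (_ : k ∈ insert (-1 : ℤ) I) => distinguishedSubgroup Λ F k)
            i (Set.mem_insert_of_mem _ hiI) hτR
        refine ⟨δ * τ, ΛI.mul_mem hδ hτI, ?_⟩
        have h0 : ⇑(δ * τ) = ⇑δ ∘ ⇑τ := rfl
        rw [h0, Set.image_comp, hτΦ, hΨ', Set.image_image]
        simp
    obtain ⟨δ, hδ, hδΦ⟩ := key (⇑γ '' Φ) hconn
    have hδΛ : δ ∈ Λ := hΛIle hδ
    set ε := δ⁻¹ * γ with hε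
    have hεΛ : ε ∈ Λ := Λ.mul_mem (Λ.inv_mem hδΛ) hγΛ
    have hεΦ : ⇑ε '' Φ = Φ := by
      rw [hε]
      have h0 : ⇑(δ⁻¹ * γ) = ⇑δ⁻¹ ∘ ⇑γ := rfl
      rw [h0, Set.image_comp, ← hδΦ, Set.image_image]
      simp
    have hεmem : ε ∈ distinguishedSubgroup Λ F (-1) := by
      refine ⟨hεΛ, ?_⟩
      rintro x ⟨m, _, rfl⟩
      have h1 : ε (F m) ∈ Φ := hεΦ ▸ ⟨F m, (hF m).1, rfl⟩
      have h2 : rk (ε (F m)) = (m : ℤ) := by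
        rw [rk_apply h (hΛ hεΛ) hΦ (hF m).1, (hF m).2]
      exact rank_unique h hΦ h1 (hF m).1 (h2.trans (hF m).2.symm)
    have : ε ∈ ΛI := by
      refine le_iSup₂ (f := fun i (_ : i ∈ insert (-1 : ℤ) I) => distinguishedSubgroup Λ F i)
        (-1 : ℤ) (Set.mem_insert _ _) hεmem
    have hγeq : γ = δ * ε := by rw [hε]; group
    exact hγeq ▸ ΛI.mul_mem hδ this

end Main
/-- The intersection property for the distinguished subgroups of a
flag-transitive group of automorphisms of a regular incidence complex: for subsets
`I, J ⊆ {-1, 0, …, n}`, `⟨R i : i ∈ I⟩ ∩ ⟨R i : i ∈ J⟩ = ⟨R i : i ∈ I ∩ J⟩`, where the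
subgroup generated by an empty index set is by convention the flag stabilizer
`R (-1) = Λ_Φ` (which is contained in every `R i`; accordingly the index `-1` is adjoined
throughout). -/
theorem distinguished_intersection_property
    {α : Type u} [PartialOrder α] {n : ℕ} (rk : α → ℤ)
    (h : IsIncidenceComplex n rk)
    (Λ : Subgroup (Equiv.Perm α)) (hΛ : Λ ≤ orderAutGroup α)
    (htrans : FlagTransitive Λ)
    (Φ : Set α) (hΦ : IsMaxChain (· ≤ ·) Φ)
    (F : Fin n → α) (hF : ∀ i : Fin n, F i ∈ Φ ∧ rk (F i) = (i : ℤ))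
    (I J : Set ℤ) (hI : I ⊆ Set.Icc (-1 : ℤ) n) (hJ : J ⊆ Set.Icc (-1 : ℤ) n) :
    (⨆ i ∈ insert (-1 : ℤ) I, distinguishedSubgroup Λ F i)
        ⊓ (⨆ i ∈ insert (-1 : ℤ) J, distinguishedSubgroup Λ F i)
      = ⨆ i ∈ insert (-1 : ℤ) (I ∩ J), distinguishedSubgroup Λ F i := by

  rw [sup_distinguished_eq_stab h Λ hΛ htrans Φ hΦ F hF I,
    sup_distinguished_eq_stab h Λ hΛ htrans Φ hΦ F hF J,
    sup_distinguished_eq_stab h Λ hΛ htrans Φ hΦ F hF (I ∩ J)]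
  ext γ
  simp only [Subgroup.mem_inf, mem_stabOf]
  constructor
  · rintro ⟨⟨hΛ1, h1⟩, ⟨_, h2⟩⟩
    refine ⟨hΛ1, ?_⟩
    rintro x ⟨j, hj, rfl⟩
    by_cases hI' : (j : ℤ) ∈ I
    · exact h2 _ ⟨j, fun hJ' => hj ⟨hI', hJ'⟩, rfl⟩
    · exact h1 _ ⟨j, hI', rfl⟩
  · rintro ⟨hΛ1, h1⟩
    exact ⟨⟨hΛ1, fun x ⟨j, hj, e⟩ => h1 x ⟨j, fun hc => hj hc.1, e⟩⟩,
      ⟨hΛ1, fun x ⟨j, hj, e⟩ => h1 x ⟨j, fun hc => hj hc.2, e⟩⟩⟩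
end
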